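/- The Birget–Rhodes expansion of a group G is an inverse semigroup: every element (R,g) has a unique generalized inverse, given by (g⁻¹R, g⁻¹). -/

import Mathlib

/-- The Birget–Rhodes expansion of a group `G`: pairs `(R, g)` where `R` is a
finite subset of `G` containing `1` and `g`. -/
def BR (G : Type*) [Group G] [DecidableEq G] : Type _ :=
  {p : Finset G × G // (1 : G) ∈ p.1 ∧ p.2 ∈ p.1}

variable {G : Type*} [Group G] [DecidableEq G]

/-- Multiplication `(R,g)·(S,h) = (R ∪ gS, gh)`. -/
instance : Mul (BR G) :=
  ⟨fun x y =>
    ⟨(x.1.1 ∪ y.1.1.image (x.1.2 * ·), x.1.2 * y.1.2),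
      Finset.mem_union_left _ x.2.1,
      Finset.mem_union_right _ (Finset.mem_image_of_mem _ y.2.2)⟩⟩

/-- The candidate generalized inverse `(g⁻¹R, g⁻¹)` of `(R,g)`. -/
def BRinv (x : BR G) : BR G :=
  ⟨(x.1.1.image (x.1.2⁻¹ * ·), x.1.2⁻¹),
    by simpa using Finset.mem_image_of_mem (x.1.2⁻¹ * ·) x.2.2,
    by simpa using Finset.mem_image_of_mem (x.1.2⁻¹ * ·) x.2.1⟩

lemma BR_mul_val (x y : BR G) :
    (x * y).1 = (x.1.1 ∪ y.1.1.image (x.1.2 * ·), x.1.2 * y.1.2) := rfl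

lemma img_img (a b : G) (R : Finset G) :
    (R.image (b * ·)).image (a * ·) = R.image ((a * b) * ·) := by
  rw [Finset.image_image]
  congr 1
  ext c
  simp [mul_assoc]

lemma img_one (R : Finset G) : R.image ((1 : G) * ·) = R := by
  simp

/-- The Birget–Rhodes expansion is an inverse semigroup: every element `(R,g)`
has a unique generalized inverse, given by `(g⁻¹R, g⁻¹)`. -/
theorem BR_inverseSemigroup (x : BR G) :
    (x * BRinv x * x = x ∧ BRinv x * x * BRinv x = BRinv x) ∧
      ∀ y : BR G, x * y * x = x → y * x * y = y → y = BRinv x := by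
  obtain ⟨⟨R, g⟩, h1, hg⟩ := x
  constructor
  · constructor
    · apply Subtype.ext
      erw [BR_mul_val, BR_mul_val]
      simp only [BR_mul_val, BRinv, Prod.mk.injEq]
      constructor
      · rw [img_img, mul_inv_cancel, img_one, Finset.union_self, Finset.union_self]
      · group
    · apply Subtype.ext
      erw [BR_mul_val, BR_mul_val]
      simp only [BR_mul_val, BRinv, Prod.mk.injEq]
      constructor
      · simp only [Finset.union_self, img_img, inv_mul_cancel, one_mul, Finset.image_id']
      · group
  · rintro ⟨⟨S, h⟩, h1S, hhS⟩ e1 e2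
    have hval1 : g * h * g = g := congrArg (·.1.2) e1
    have hgh : g * h = 1 := mul_right_cancel (b := g) (by rw [hval1, one_mul])
    have hh : h = g⁻¹ := (inv_eq_of_mul_eq_one_right hgh).symm
    subst hh
    apply Subtype.ext
    have hs1 : (R ∪ S.image (g * ·)) ∪ R.image ((g * g⁻¹) * ·) = R :=
      congrArg (·.1.1) e1
    have hs2 : (S ∪ R.image (g⁻¹ * ·)) ∪ S.image ((g⁻¹ * g) * ·) = S :=
      congrArg (·.1.1) e2
    simp only [mul_inv_cancel, inv_mul_cancel, img_one, Finset.union_self,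
      Finset.union_idempotent] at hs1 hs2
    have hSsub : S.image (g * ·) ⊆ R := fun a ha => by
      rw [← hs1]; exact Finset.mem_union_left _ (Finset.mem_union_right _ ha)
    have hRsub : R.image (g⁻¹ * ·) ⊆ S := fun a ha => by
      rw [← hs2]; exact Finset.mem_union_left _ (Finset.mem_union_right _ ha)
    show (S, g⁻¹) = (R.image (g⁻¹ * ·), g⁻¹)
    refine Prod.ext ?_ rfl
    apply Finset.Subset.antisymm _ hRsub
    intro a ha
    have : g * a ∈ R := hSsub (Finset.mem_image_of_mem _ ha)
    simpa using Finset.mem_image_of_mem (g⁻¹ * ·) this
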